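/- For a fixed finite set of atoms and each n ∈ ℕ, there are, modulo IPC-provable equivalence, only finitely many propositional formulas A with implication-nesting depth c→(A) ≤ n. -/

import Mathlib

inductive Fm : Type
  | bot : Fm
  | atom : ℕ → Fm
  | and : Fm → Fm → Fm
  | or : Fm → Fm → Fm
  | imp : Fm → Fm → Fm
deriving DecidableEq

namespace Fm

def neg (A : Fm) : Fm := A.imp .bot
def top : Fm := Fm.bot.imp .bot
def iff (A B : Fm) : Fm := (A.imp B).and (B.imp A)

def subst (θ : ℕ → Fm) : Fm → Fm
  | bot => bot
  | atom n => θ n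
  | and A B => (A.subst θ).and (B.subst θ)
  | or A B => (A.subst θ).or (B.subst θ)
  | imp A B => (A.subst θ).imp (B.subst θ)

def atoms : Fm → Finset ℕ
  | bot => ∅
  | atom n => {n}
  | and A B => A.atoms ∪ B.atoms
  | or A B => A.atoms ∪ B.atoms
  | imp A B => A.atoms ∪ B.atoms

/-- maximal nesting of implications in the left/overall: `c→`. -/
def cimp : Fm → ℕ
  | bot => 0
  | atom _ => 0
  | and A B => max A.cimp B.cimp
  | or A B => max A.cimp B.cimp
  | imp A B => 1 + max A.cimp B.cimp

end Fm

def bigAndL (l : List Fm) : Fm := l.foldr Fm.and Fm.top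
def bigOrL (l : List Fm) : Fm := l.foldr Fm.or Fm.bot

/-- nonempty disjunction -/
def bigOrNE : Fm → List Fm → Fm
  | A, [] => A
  | A, B :: l => A.or (bigOrNE B l)

/-- Hilbert-style intuitionistic propositional calculus. -/
inductive IPC : Fm → Prop
  | imp_k (A B : Fm) : IPC (A.imp (B.imp A))
  | imp_s (A B C : Fm) : IPC ((A.imp (B.imp C)).imp ((A.imp B).imp (A.imp C)))
  | and_intro (A B : Fm) : IPC (A.imp (B.imp (A.and B)))
  | and_left (A B : Fm) : IPC ((A.and B).imp A)
  | and_right (A B : Fm) : IPC ((A.and B).imp B)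
  | or_inl (A B : Fm) : IPC (A.imp (A.or B))
  | or_inr (A B : Fm) : IPC (B.imp (A.or B))
  | or_elim (A B C : Fm) : IPC ((A.imp C).imp ((B.imp C).imp ((A.or B).imp C)))
  | exfalso (A : Fm) : IPC (Fm.bot.imp A)
  | mp {A B : Fm} : IPC (A.imp B) → IPC A → IPC B

/-- Γ-preservativity in the logic T : `A ⊳_{T,Γ} B`. -/
def Pres (T : Fm → Prop) (Γ : Set Fm) (A B : Fm) : Prop :=
  ∀ E ∈ Γ, T (E.imp A) → T (E.imp B)

/-- substitutions are identity on the parameters. -/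
def IdOnPar (par : Finset ℕ) (θ : ℕ → Fm) : Prop :=
  ∀ p ∈ par, θ p = Fm.atom p

/-- implication-free formulas. -/
inductive NI : Fm → Prop
  | bot : NI .bot
  | atom (n : ℕ) : NI (.atom n)
  | and {A B : Fm} : NI A → NI B → NI (A.and B)
  | or {A B : Fm} : NI A → NI B → NI (A.or B)

/-- No Nested Implications in the Left. -/
inductive NNIL : Fm → Prop
  | bot : NNIL .bot
  | atom (n : ℕ) : NNIL (.atom n)
  | and {A B : Fm} : NNIL A → NNIL B → NNIL (A.and B)
  | or {A B : Fm} : NNIL A → NNIL B → NNIL (A.or B)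
  | imp {A B : Fm} : NI A → NNIL B → NNIL (A.imp B)

def IPCPrime (A : Fm) : Prop :=
  ∀ B C, IPC (A.imp (B.or C)) → IPC (A.imp B) ∨ IPC (A.imp C)

/-- T-components: `⋀Γ ∧ ⋀Δ`, Γ atoms, Δ implications with atomic
antecedents not T-provable from Γ. -/
def IsComponentOver (T : Fm → Prop) (B : Fm) : Prop :=
  ∃ (as : List ℕ) (imps : List (ℕ × Fm)),
    B = (bigAndL (as.map Fm.atom)).and
          (bigAndL (imps.map fun p => (Fm.atom p.1).imp p.2)) ∧
    ∀ p ∈ imps, ¬ T ((bigAndL (as.map Fm.atom)).imp (Fm.atom p.1))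

/- ## Auxiliary development -/

/-- derivations from a list of hypotheses -/
inductive Der (Γ : List Fm) : Fm → Prop
  | thm {A} : IPC A → Der Γ A
  | hyp {A} : A ∈ Γ → Der Γ A
  | mp {A B} : Der Γ (A.imp B) → Der Γ A → Der Γ B

theorem ipc_id (A : Fm) : IPC (A.imp A) :=
  IPC.mp (IPC.mp (IPC.imp_s A (A.imp A) A) (IPC.imp_k A (A.imp A))) (IPC.imp_k A A)

theorem Der.intro {Γ : List Fm} {A B : Fm} (h : Der (A :: Γ) B) : Der Γ (A.imp B) := by
  induction h with
  | thm h => exact .mp (.thm (IPC.imp_k _ _)) (.thm h)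
  | hyp hm =>
    rcases List.mem_cons.mp hm with h | h
    · subst h; exact .thm (ipc_id _)
    · exact .mp (.thm (IPC.imp_k _ _)) (.hyp h)
  | mp _ _ ih1 ih2 => exact .mp (.mp (.thm (IPC.imp_s _ _ _)) ih1) ih2

theorem Der.toIPC {A : Fm} (h : Der [] A) : IPC A := by
  induction h with
  | thm h => exact h
  | hyp hm => simp at hm
  | mp _ _ ih1 ih2 => exact IPC.mp ih1 ih2

theorem Der.andI {Γ} {A B : Fm} (h1 : Der Γ A) (h2 : Der Γ B) : Der Γ (A.and B) :=
  .mp (.mp (.thm (IPC.and_intro _ _)) h1) h2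
theorem Der.andL {Γ} {A B : Fm} (h : Der Γ (A.and B)) : Der Γ A :=
  .mp (.thm (IPC.and_left _ _)) h
theorem Der.andR {Γ} {A B : Fm} (h : Der Γ (A.and B)) : Der Γ B :=
  .mp (.thm (IPC.and_right _ _)) h
theorem Der.orI1 {Γ} {A : Fm} (B : Fm) (h : Der Γ A) : Der Γ (A.or B) :=
  .mp (.thm (IPC.or_inl _ _)) h
theorem Der.orI2 {Γ} (A : Fm) {B : Fm} (h : Der Γ B) : Der Γ (A.or B) :=
  .mp (.thm (IPC.or_inr _ _)) h
theorem Der.orE {Γ} {A B C : Fm} (h : Der Γ (A.or B)) (h1 : Der (A :: Γ) C)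
    (h2 : Der (B :: Γ) C) : Der Γ C :=
  .mp (.mp (.mp (.thm (IPC.or_elim A B C)) h1.intro) h2.intro) h
theorem Der.efq {Γ} (A : Fm) (h : Der Γ Fm.bot) : Der Γ A :=
  .mp (.thm (IPC.exfalso _)) h

theorem ipc_comp {A B C : Fm} (h1 : IPC (A.imp B)) (h2 : IPC (B.imp C)) :
    IPC (A.imp C) :=
  Der.toIPC (Der.intro (.mp (.thm h2) (.mp (.thm h1) (.hyp (by simp)))))

theorem ipc_or_elim {A B C : Fm} (h1 : IPC (A.imp C)) (h2 : IPC (B.imp C)) :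
    IPC ((A.or B).imp C) :=
  IPC.mp (IPC.mp (IPC.or_elim A B C) h1) h2

theorem ipc_imp_top (E : Fm) : IPC (E.imp Fm.top) :=
  IPC.mp (IPC.imp_k (Fm.bot.imp Fm.bot) E) (ipc_id Fm.bot)

theorem ipc_imp_andI {E A B : Fm} (h1 : IPC (E.imp A)) (h2 : IPC (E.imp B)) :
    IPC (E.imp (A.and B)) :=
  Der.toIPC (Der.intro (Der.andI (.mp (.thm h1) (.hyp (by simp)))
    (.mp (.thm h2) (.hyp (by simp)))))

/-- IPC-equivalence -/
def Eqv (A B : Fm) : Prop := IPC (A.imp B) ∧ IPC (B.imp A)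

theorem Eqv.refl (A : Fm) : Eqv A A := ⟨ipc_id A, ipc_id A⟩
theorem Eqv.symm {A B} (h : Eqv A B) : Eqv B A := ⟨h.2, h.1⟩
theorem Eqv.trans {A B C} (h1 : Eqv A B) (h2 : Eqv B C) : Eqv A C :=
  ⟨ipc_comp h1.1 h2.1, ipc_comp h2.2 h1.2⟩

theorem Eqv.and_cong {A A' B B' : Fm} (ha : Eqv A A') (hb : Eqv B B') :
    Eqv (A.and B) (A'.and B') := by
  constructor
  · exact ipc_imp_andI (ipc_comp (IPC.and_left A B) ha.1) (ipc_comp (IPC.and_right A B) hb.1)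
  · exact ipc_imp_andI (ipc_comp (IPC.and_left A' B') ha.2) (ipc_comp (IPC.and_right A' B') hb.2)

theorem Eqv.or_cong {A A' B B' : Fm} (ha : Eqv A A') (hb : Eqv B B') :
    Eqv (A.or B) (A'.or B') := by
  constructor
  · exact ipc_or_elim (ipc_comp ha.1 (IPC.or_inl A' B')) (ipc_comp hb.1 (IPC.or_inr A' B'))
  · exact ipc_or_elim (ipc_comp ha.2 (IPC.or_inl A B)) (ipc_comp hb.2 (IPC.or_inr A B))

theorem ipc_imp_mono {A A' B B' : Fm} (ha : IPC (A'.imp A)) (hb : IPC (B.imp B')) :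
    IPC ((A.imp B).imp (A'.imp B')) :=
  Der.toIPC <| Der.intro <| Der.intro <|
    .mp (.thm hb) (.mp (.hyp (by simp)) (.mp (.thm ha) (.hyp (by simp))))

theorem Eqv.imp_cong {A A' B B' : Fm} (ha : Eqv A A') (hb : Eqv B B') :
    Eqv (A.imp B) (A'.imp B') :=
  ⟨ipc_imp_mono ha.2 hb.1, ipc_imp_mono ha.1 hb.2⟩
theorem bigAndL_cons (x : Fm) (t : List Fm) : bigAndL (x :: t) = x.and (bigAndL t) := rfl
theorem bigOrL_cons (x : Fm) (t : List Fm) : bigOrL (x :: t) = x.or (bigOrL t) := rfl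

theorem bigAnd_elim {c : List Fm} {A : Fm} (h : A ∈ c) : IPC ((bigAndL c).imp A) := by
  induction c with
  | nil => simp at h
  | cons x t ih =>
    rcases List.mem_cons.mp h with h | h
    · subst h; exact IPC.and_left _ _
    · exact ipc_comp (IPC.and_right _ _) (ih h)

theorem imp_bigAnd {E : Fm} {c : List Fm} (h : ∀ A ∈ c, IPC (E.imp A)) :
    IPC (E.imp (bigAndL c)) := by
  induction c with
  | nil => exact ipc_imp_top E
  | cons x t ih =>
    exact ipc_imp_andI (h x (by simp)) (ih fun A hA => h A (by simp [hA]))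

theorem bigAnd_subset {c1 c2 : List Fm} (h : ∀ A ∈ c1, A ∈ c2) :
    IPC ((bigAndL c2).imp (bigAndL c1)) :=
  imp_bigAnd fun A hA => bigAnd_elim (h A hA)

theorem bigOr_intro {d : List Fm} {A : Fm} (h : A ∈ d) : IPC (A.imp (bigOrL d)) := by
  induction d with
  | nil => simp at h
  | cons x t ih =>
    rcases List.mem_cons.mp h with h | h
    · subst h; exact IPC.or_inl _ _
    · exact ipc_comp (ih h) (IPC.or_inr _ _)

theorem bigOr_elim {d : List Fm} {E : Fm} (h : ∀ A ∈ d, IPC (A.imp E)) :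
    IPC ((bigOrL d).imp E) := by
  induction d with
  | nil => exact IPC.exfalso E
  | cons x t ih =>
    exact ipc_or_elim (h x (by simp)) (ih fun A hA => h A (by simp [hA]))

theorem bigOr_subset {d1 d2 : List Fm} (h : ∀ A ∈ d1, A ∈ d2) :
    IPC ((bigOrL d1).imp (bigOrL d2)) :=
  bigOr_elim fun A hA => bigOr_intro (h A hA)

theorem der_hyp0 {Γ : List Fm} {A : Fm} : Der (A :: Γ) A := .hyp List.mem_cons_self
theorem der_hyp1 {Γ : List Fm} {A B : Fm} : Der (B :: A :: Γ) A :=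
  .hyp (List.mem_cons_of_mem _ List.mem_cons_self)

theorem and_or_single {x : Fm} {d : List Fm} {E : Fm}
    (h : ∀ y ∈ d, IPC ((x.and y).imp E)) : IPC ((x.and (bigOrL d)).imp E) := by
  induction d with
  | nil => exact Der.toIPC <| Der.intro <| Der.efq E (Der.andR der_hyp0)
  | cons y t ih =>
    refine Der.toIPC <| Der.intro <| Der.orE (Der.andR der_hyp0) ?_ ?_
    · exact .mp (.thm (h y (by simp)))
        (Der.andI (Der.andL der_hyp1) der_hyp0)
    · exact .mp (.thm (ih fun y hy => h y (by simp [hy])))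
        (Der.andI (Der.andL der_hyp1) der_hyp0)

theorem and_or_distrib {d1 d2 : List Fm} {E : Fm}
    (h : ∀ x ∈ d1, ∀ y ∈ d2, IPC ((x.and y).imp E)) :
    IPC (((bigOrL d1).and (bigOrL d2)).imp E) := by
  induction d1 with
  | nil => exact Der.toIPC <| Der.intro <| Der.efq E (Der.andL der_hyp0)
  | cons x t ih =>
    refine Der.toIPC <| Der.intro <| Der.orE (Der.andL der_hyp0) ?_ ?_
    · exact .mp (.thm (and_or_single (h x (by simp))))
        (Der.andI der_hyp0 (Der.andR der_hyp1))
    · exact .mp (.thm (ih fun y hy => h y (by simp [hy])))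
        (Der.andI der_hyp0 (Der.andR der_hyp1))
/-- disjunctive normal forms over a list of literal formulas -/
def dnfForms (l : List Fm) : List Fm :=
  l.sublists.sublists.map (fun ds => bigOrL (ds.map bigAndL))

/-- formulas that are and/or combinations of ⊥ and formulas equivalent to members of `l` -/
inductive Good (l : List Fm) : Fm → Prop
  | bot : Good l .bot
  | leaf {A B} : B ∈ l → Eqv A B → Good l A
  | and {A B} : Good l A → Good l B → Good l (A.and B)
  | or {A B} : Good l A → Good l B → Good l (A.or B)

theorem good_nf {l : List Fm} {A : Fm} (h : Good l A) :
    ∃ ds : List (List Fm), (∀ c ∈ ds, c.Sublist l) ∧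
      Eqv A (bigOrL (ds.map bigAndL)) := by
  induction h with
  | bot => exact ⟨[], by simp, Eqv.refl _⟩
  | @leaf A B hB hAB =>
    refine ⟨[[B]], by simpa using List.singleton_sublist.mpr hB, ?_⟩
    have h1 : Eqv B (bigAndL [B]) :=
      ⟨ipc_imp_andI (ipc_id B) (ipc_imp_top B), IPC.and_left _ _⟩
    have h2 : Eqv (bigAndL [B]) (bigOrL [bigAndL [B]]) :=
      ⟨IPC.or_inl _ _, ipc_or_elim (ipc_id _) (IPC.exfalso _)⟩
    exact (hAB.trans h1).trans h2
  | @or A B _ _ ihA ihB =>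
    obtain ⟨ds1, hds1, e1⟩ := ihA
    obtain ⟨ds2, hds2, e2⟩ := ihB
    refine ⟨ds1 ++ ds2, ?_, ?_⟩
    · intro c hc; rcases List.mem_append.mp hc with hc | hc
      · exact hds1 c hc
      · exact hds2 c hc
    have : Eqv ((bigOrL (ds1.map bigAndL)).or (bigOrL (ds2.map bigAndL)))
        (bigOrL ((ds1 ++ ds2).map bigAndL)) := by
      constructor
      · refine ipc_or_elim (bigOr_subset ?_) (bigOr_subset ?_) <;>
          intro x hx <;> simp only [List.map_append, List.mem_append]
        · exact Or.inl hx
        · exact Or.inr hx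
      · refine bigOr_elim ?_
        intro x hx
        simp only [List.map_append, List.mem_append] at hx
        rcases hx with hx | hx
        · exact ipc_comp (bigOr_intro hx) (IPC.or_inl _ _)
        · exact ipc_comp (bigOr_intro hx) (IPC.or_inr _ _)
    exact (e1.or_cong e2).trans this
  | @and A B _ _ ihA ihB =>
    classical
    obtain ⟨ds1, hds1, e1⟩ := ihA
    obtain ⟨ds2, hds2, e2⟩ := ihB
    set merge : List Fm → List Fm → List Fm :=
      fun c1 c2 => l.filter (fun x => decide (x ∈ c1 ∨ x ∈ c2)) with hmerge
    have merge_mem : ∀ c1 c2 x, x ∈ merge c1 c2 ↔ x ∈ l ∧ (x ∈ c1 ∨ x ∈ c2) := by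
      intro c1 c2 x; simp [hmerge]
    have merge_sub : ∀ c1 c2, (merge c1 c2).Sublist l := fun c1 c2 => List.filter_sublist
    have merge_eqv : ∀ c1 ∈ ds1, ∀ c2 ∈ ds2,
        Eqv ((bigAndL c1).and (bigAndL c2)) (bigAndL (merge c1 c2)) := by
      intro c1 hc1 c2 hc2
      constructor
      · refine imp_bigAnd ?_
        intro x hx
        rcases ((merge_mem c1 c2 x).mp hx).2 with hx | hx
        · exact ipc_comp (IPC.and_left _ _) (bigAnd_elim hx)
        · exact ipc_comp (IPC.and_right _ _) (bigAnd_elim hx)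
      · refine ipc_imp_andI (bigAnd_subset ?_) (bigAnd_subset ?_)
        · intro x hx
          exact (merge_mem c1 c2 x).mpr ⟨(hds1 c1 hc1).subset hx, Or.inl hx⟩
        · intro x hx
          exact (merge_mem c1 c2 x).mpr ⟨(hds2 c2 hc2).subset hx, Or.inr hx⟩
    refine ⟨ds1.flatMap (fun c1 => ds2.map (fun c2 => merge c1 c2)), ?_, ?_⟩
    · intro c hc
      simp only [List.mem_flatMap, List.mem_map] at hc
      obtain ⟨c1, _, c2, _, rfl⟩ := hc
      exact merge_sub c1 c2
    refine (e1.and_cong e2).trans ⟨?_, ?_⟩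
    · refine and_or_distrib ?_
      intro x hx y hy
      simp only [List.mem_map] at hx hy
      obtain ⟨c1, hc1, rfl⟩ := hx
      obtain ⟨c2, hc2, rfl⟩ := hy
      refine ipc_comp (merge_eqv c1 hc1 c2 hc2).1 (bigOr_intro ?_)
      simp only [List.mem_map, List.mem_flatMap]
      exact ⟨merge c1 c2, ⟨c1, hc1, c2, hc2, rfl⟩, rfl⟩
    · refine bigOr_elim ?_
      intro x hx
      simp only [List.mem_map, List.mem_flatMap] at hx
      obtain ⟨c, ⟨c1, hc1, c2, hc2, rfl⟩, rfl⟩ := hx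
      refine ipc_comp (merge_eqv c1 hc1 c2 hc2).2 ?_
      refine ipc_imp_andI
        (ipc_comp (IPC.and_left _ _) (bigOr_intro (List.mem_map_of_mem hc1)))
        (ipc_comp (IPC.and_right _ _) (bigOr_intro (List.mem_map_of_mem hc2)))

theorem nf_canon {l : List Fm} {A : Fm} (h : Good l A) :
    ∃ D ∈ dnfForms l, Eqv A D := by
  classical
  obtain ⟨ds, hds, e⟩ := good_nf h
  set ds' : List (List Fm) := l.sublists.filter (fun c => decide (c ∈ ds)) with hds'
  have mem' : ∀ c, c ∈ ds' ↔ c.Sublist l ∧ c ∈ ds := by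
    intro c; simp [hds', List.mem_sublists]
  refine ⟨bigOrL (ds'.map bigAndL), ?_, ?_⟩
  · exact List.mem_map_of_mem (List.mem_sublists.mpr List.filter_sublist)
  refine e.trans ⟨bigOr_subset ?_, bigOr_subset ?_⟩
  · intro x hx
    simp only [List.mem_map] at hx ⊢
    obtain ⟨c, hc, rfl⟩ := hx
    exact ⟨c, (mem' c).mpr ⟨hds c hc, hc⟩, rfl⟩
  · intro x hx
    simp only [List.mem_map] at hx ⊢
    obtain ⟨c, hc, rfl⟩ := hx
    exact ⟨c, ((mem' c).mp hc).2, rfl⟩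
/-- literals available at implication-depth `n` over atoms from `S` -/
noncomputable def litsN (S : Finset ℕ) : ℕ → List Fm
  | 0 => S.toList.map Fm.atom
  | n + 1 => S.toList.map Fm.atom ++
      (dnfForms (litsN S n)).flatMap
        (fun a => (dnfForms (litsN S n)).map (fun b => a.imp b))

theorem atom_mem_litsN {S : Finset ℕ} {p : ℕ} (hp : p ∈ S) (n : ℕ) :
    Fm.atom p ∈ litsN S n := by
  have h : Fm.atom p ∈ S.toList.map Fm.atom :=
    List.mem_map_of_mem (Finset.mem_toList.mpr hp)
  cases n with
  | zero => exact h
  | succ m => exact List.mem_append_left _ h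

theorem main_good {S : Finset ℕ} : ∀ (A : Fm) (n : ℕ), A.atoms ⊆ S → A.cimp ≤ n →
    Good (litsN S n) A := by
  intro A
  induction A with
  | bot => intro n _ _; exact Good.bot
  | atom p =>
    intro n hS _
    have hp : p ∈ S := hS (by simp [Fm.atoms])
    exact Good.leaf (atom_mem_litsN hp n) (Eqv.refl _)
  | and A B ihA ihB =>
    intro n hS hc
    simp only [Fm.atoms, Finset.union_subset_iff] at hS
    simp only [Fm.cimp, max_le_iff] at hc
    exact Good.and (ihA n hS.1 hc.1) (ihB n hS.2 hc.2)
  | or A B ihA ihB =>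
    intro n hS hc
    simp only [Fm.atoms, Finset.union_subset_iff] at hS
    simp only [Fm.cimp, max_le_iff] at hc
    exact Good.or (ihA n hS.1 hc.1) (ihB n hS.2 hc.2)
  | imp A B ihA ihB =>
    intro n hS hc
    simp only [Fm.atoms, Finset.union_subset_iff] at hS
    simp only [Fm.cimp] at hc
    cases n with
    | zero => omega
    | succ m =>
      have hA : A.cimp ≤ m := by omega
      have hB : B.cimp ≤ m := by omega
      obtain ⟨A', hA', eA⟩ := nf_canon (ihA m hS.1 hA)
      obtain ⟨B', hB', eB⟩ := nf_canon (ihB m hS.2 hB)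
      refine Good.leaf (l := litsN S (m + 1)) ?_ (eA.imp_cong eB)
      refine List.mem_append_right _ ?_
      simp only [List.mem_flatMap, List.mem_map]
      exact ⟨A', hA', B', hB', rfl⟩

theorem stmt_9 (S : Finset ℕ) (n : ℕ) :
    ∃ L : Finset Fm, ∀ A : Fm, A.atoms ⊆ S → A.cimp ≤ n →
      ∃ B ∈ L, IPC (A.iff B) := by
  classical
  refine ⟨(dnfForms (litsN S n)).toFinset, ?_⟩
  intro A hS hc
  obtain ⟨D, hD, e⟩ := nf_canon (main_good A n hS hc)
  refine ⟨D, List.mem_toFinset.mpr hD, ?_⟩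
  exact IPC.mp (IPC.mp (IPC.and_intro _ _) e.1) e.2
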